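/- Fix a real h > 0 and define f_h^#(t) := (2^h/Γ(h)) ∑_{n=0}^∞ (−1)^n (Γ(n+h)/Γ(n+1)) · ((2n+h)/√(2πt³)) · exp(−(2n+h)²/(2t)) for t > 0. Then for every real λ > 0, ∫₀^∞ e^{−λt} f_h^#(t) dt = (cosh √(2λ))^{−h}. -/

import Mathlib

open MeasureTheory

namespace LaplaceSharpAux

open Set


lemma image_inv (k : ℝ) (hk : 0 < k) : (fun v : ℝ => k / v) '' Set.Ioi 0 = Set.Ioi 0 := by
  ext y
  constructor
  · rintro ⟨v, hv, rfl⟩; exact div_pos hk hv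
  · intro hy
    refine ⟨k / y, div_pos hk hy, ?_⟩
    field_simp

lemma image_sq : (fun v : ℝ => v ^ 2) '' Set.Ioi 0 = Set.Ioi 0 := by
  ext y
  constructor
  · rintro ⟨v, hv, rfl⟩; exact pow_pos (Set.mem_Ioi.1 hv) 2
  · intro hy
    exact ⟨Real.sqrt y, Real.sqrt_pos.2 hy, Real.sq_sqrt (le_of_lt hy)⟩

lemma image_lin (b e : ℝ) (hb : 0 < b) (he : 0 < e) :
    (fun v : ℝ => b * v - e / v) '' Set.Ioi 0 = Set.univ := by
  apply Set.eq_univ_of_forall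
  intro u
  have hd2 : (0:ℝ) ≤ u ^ 2 + 4 * b * e := by positivity
  set d := Real.sqrt (u ^ 2 + 4 * b * e) with hd
  have hdsq : d ^ 2 = u ^ 2 + 4 * b * e := Real.sq_sqrt hd2
  have hdu : |u| < d := by
    have : u ^ 2 < d ^ 2 := by nlinarith
    have hd0 : 0 ≤ d := Real.sqrt_nonneg _
    nlinarith [abs_nonneg u, sq_abs u]
  have hv : 0 < (u + d) / (2 * b) := by
    apply div_pos _ (by linarith)
    have := neg_abs_le u
    linarith
  refine ⟨(u + d) / (2 * b), hv, ?_⟩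
  set v := (u + d) / (2 * b) with hvdef
  have hne : v ≠ 0 := ne_of_gt hv
  have hb' : (2 * b) ≠ 0 := by positivity
  have key : b * v ^ 2 - e = u * v := by
    rw [hvdef]
    field_simp
    nlinarith [hdsq]
  field_simp
  linear_combination key

/-- Change of variables `t = v²` on `Ioi 0`. -/
lemma cov_sq (O : ℝ → ℝ) :
    (∫ t in Set.Ioi (0:ℝ), O t) = (∫ v in Set.Ioi (0:ℝ), 2 * v * O (v ^ 2))
      ∧ (IntegrableOn O (Set.Ioi 0) ↔
          IntegrableOn (fun v => 2 * v * O (v ^ 2)) (Set.Ioi 0)) := by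
  have hderiv : ∀ v ∈ Set.Ioi (0:ℝ),
      HasDerivWithinAt (fun v : ℝ => v ^ 2) (2 * v) (Set.Ioi 0) v := by
    intro v hv
    simpa using (hasDerivAt_pow 2 v).hasDerivWithinAt
  have hinj : Set.InjOn (fun v : ℝ => v ^ 2) (Set.Ioi 0) := by
    intro x hx y hy hxy
    have hx0 : (0:ℝ) < x := hx
    have hy0 : (0:ℝ) < y := hy
    have h : (x - y) * (x + y) = 0 := by
      simp only at hxy
      linear_combination hxy
    rcases mul_eq_zero.1 h with h | h
    · linarith
    · linarith
  have heq : Set.EqOn (fun v : ℝ => |2 * v| • O (v ^ 2))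
      (fun v : ℝ => 2 * v * O (v ^ 2)) (Set.Ioi 0) := by
    intro v hv
    have hv0 : (0:ℝ) < v := hv
    simp only [smul_eq_mul]
    rw [abs_of_pos (by linarith)]
  constructor
  · conv_lhs => rw [← image_sq]
    rw [integral_image_eq_integral_abs_deriv_smul measurableSet_Ioi hderiv hinj O]
    exact setIntegral_congr_fun measurableSet_Ioi heq
  · conv_lhs => rw [← image_sq]
    rw [integrableOn_image_iff_integrableOn_abs_deriv_smul measurableSet_Ioi hderiv hinj O]
    exact integrableOn_congr_fun heq measurableSet_Ioi

/-- Change of variables `t = k / v` on `Ioi 0`. -/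
lemma cov_inv (k : ℝ) (hk : 0 < k) (O : ℝ → ℝ) :
    (∫ t in Set.Ioi (0:ℝ), O t) = ∫ v in Set.Ioi (0:ℝ), k / v ^ 2 * O (k / v) := by
  have hderiv : ∀ v ∈ Set.Ioi (0:ℝ),
      HasDerivWithinAt (fun v : ℝ => k / v) (-(k / v ^ 2)) (Set.Ioi 0) v := by
    intro v hv
    have hv0 : (0:ℝ) < v := hv
    have h2 : HasDerivAt (fun v : ℝ => k / v) (k * -(v ^ 2)⁻¹) v := by
      simpa [div_eq_mul_inv] using (hasDerivAt_inv (ne_of_gt hv0)).const_mul k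
    have : HasDerivAt (fun v : ℝ => k / v) (-(k / v ^ 2)) v := by
      convert h2 using 1
      field_simp
    exact this.hasDerivWithinAt
  have hinj : Set.InjOn (fun v : ℝ => k / v) (Set.Ioi 0) := by
    intro x hx y hy hxy
    have hx0 : (0:ℝ) < x := hx
    have hy0 : (0:ℝ) < y := hy
    simp only at hxy
    field_simp at hxy
    linarith


  have heq : Set.EqOn (fun v : ℝ => |(-(k / v ^ 2))| • O (k / v))
      (fun v : ℝ => k / v ^ 2 * O (k / v)) (Set.Ioi 0) := by
    intro v hv
    have hv0 : (0:ℝ) < v := hv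
    simp only [smul_eq_mul, abs_neg]
    rw [abs_of_pos (by positivity)]
  conv_lhs => rw [← image_inv k hk]
  rw [integral_image_eq_integral_abs_deriv_smul measurableSet_Ioi hderiv hinj O]
  exact setIntegral_congr_fun measurableSet_Ioi heq

/-- Change of variables `u = b v - e / v`, mapping `Ioi 0` onto `ℝ`. -/
lemma cov_lin (b e : ℝ) (hb : 0 < b) (he : 0 < e) (E : ℝ → ℝ) :
    ((∫ u : ℝ, E u) = ∫ v in Set.Ioi (0:ℝ), (b + e / v ^ 2) * E (b * v - e / v))
      ∧ (Integrable E ↔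
          IntegrableOn (fun v : ℝ => (b + e / v ^ 2) * E (b * v - e / v)) (Set.Ioi 0)) := by
  have hderiv : ∀ v ∈ Set.Ioi (0:ℝ),
      HasDerivWithinAt (fun v : ℝ => b * v - e / v) (b + e / v ^ 2) (Set.Ioi 0) v := by
    intro v hv
    have hv0 : (0:ℝ) < v := hv
    have h1 : HasDerivAt (fun v : ℝ => b * v) b v := by
      simpa using (hasDerivAt_id v).const_mul b
    have h2 : HasDerivAt (fun v : ℝ => e / v) (e * -(v ^ 2)⁻¹) v := by
      simpa [div_eq_mul_inv] using (hasDerivAt_inv (ne_of_gt hv0)).const_mul e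
    have h3 := h1.sub h2
    have : HasDerivAt (fun v : ℝ => b * v - e / v) (b + e / v ^ 2) v := by
      exact h3.congr_deriv (by ring)
    exact this.hasDerivWithinAt
  have hinj : Set.InjOn (fun v : ℝ => b * v - e / v) (Set.Ioi 0) := by
    apply StrictMonoOn.injOn
    intro x hx y hy hxy
    have hx0 : (0:ℝ) < x := hx
    have hy0 : (0:ℝ) < y := hy
    simp only
    have h1 : b * x < b * y := (mul_lt_mul_iff_right₀ hb).2 hxy
    have h2 : e / y < e / x := div_lt_div_of_pos_left he hx0 hxy
    linarith
  have heq : Set.EqOn (fun v : ℝ => |b + e / v ^ 2| • E (b * v - e / v))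
      (fun v : ℝ => (b + e / v ^ 2) * E (b * v - e / v)) (Set.Ioi 0) := by
    intro v hv
    have hv0 : (0:ℝ) < v := hv
    simp only [smul_eq_mul]
    rw [abs_of_pos (by positivity)]
  constructor
  · rw [← setIntegral_univ, ← image_lin b e hb he,
      integral_image_eq_integral_abs_deriv_smul measurableSet_Ioi hderiv hinj E]
    exact setIntegral_congr_fun measurableSet_Ioi heq
  · rw [← integrableOn_univ, ← image_lin b e hb he,
      integrableOn_image_iff_integrableOn_abs_deriv_smul measurableSet_Ioi hderiv hinj E]
    exact integrableOn_congr_fun heq measurableSet_Ioi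

set_option maxHeartbeats 1000000 in
lemma levy (a lam : ℝ) (ha : 0 < a) (hlam : 0 < lam) :
    IntegrableOn (fun t : ℝ => Real.exp (-lam * t) * (a / Real.sqrt (2 * Real.pi * t ^ 3)) *
        Real.exp (-a ^ 2 / (2 * t))) (Set.Ioi 0) ∧
      ∫ t in Set.Ioi 0, Real.exp (-lam * t) * (a / Real.sqrt (2 * Real.pi * t ^ 3)) *
        Real.exp (-a ^ 2 / (2 * t)) = Real.exp (-(a * Real.sqrt (2 * lam))) := by
  have pi_pos := Real.pi_pos
  obtain ⟨c, hcdef⟩ : ∃ x : ℝ, x = Real.sqrt (2 * lam) := ⟨_, rfl⟩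
  obtain ⟨b, hbdef⟩ : ∃ x : ℝ, x = Real.sqrt lam := ⟨_, rfl⟩
  obtain ⟨e, hedef⟩ : ∃ x : ℝ, x = a / Real.sqrt 2 := ⟨_, rfl⟩
  have hs2 : Real.sqrt 2 * Real.sqrt 2 = 2 := Real.mul_self_sqrt (by norm_num)
  have hs2pos : (0:ℝ) < Real.sqrt 2 := Real.sqrt_pos.2 (by norm_num)
  have hb : 0 < b := hbdef ▸ Real.sqrt_pos.2 hlam
  have he : 0 < e := hedef ▸ div_pos ha hs2pos
  have hc : 0 < c := hcdef ▸ Real.sqrt_pos.2 (by linarith)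
  have hb2 : b ^ 2 = lam := hbdef ▸ Real.sq_sqrt hlam.le
  have hc2 : c ^ 2 = 2 * lam := hcdef ▸ Real.sq_sqrt (by linarith)
  have he2 : e ^ 2 = a ^ 2 / 2 := by
    rw [hedef, div_pow]; congr 1; rw [sq, hs2]
  have hsb : c = Real.sqrt 2 * b := by
    rw [hcdef, hbdef, Real.sqrt_mul (by norm_num)]
  have hse : Real.sqrt 2 * e = a := by
    rw [hedef]; field_simp
  have hbe : 2 * (b * e) = a * c := by
    have h1 : 2 * (b * e) = (Real.sqrt 2 * b) * (Real.sqrt 2 * e) := by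
      linear_combination -(b * e) * hs2
    rw [h1, hse, ← hsb]; ring
  -- the Gaussian and its pullback under v ↦ b v - e / v
  have hEint : Integrable (fun u : ℝ => Real.exp (-u ^ 2)) := by
    simpa using integrable_exp_neg_mul_sq (one_pos (α := ℝ))
  have hEval : (∫ u : ℝ, Real.exp (-u ^ 2)) = Real.sqrt Real.pi := by
    have := integral_gaussian (1 : ℝ)
    simpa using this
  obtain ⟨hlin_val, hlin_iff⟩ := cov_lin b e hb he (fun u => Real.exp (-u ^ 2))
  have hpull_int : IntegrableOn
      (fun v : ℝ => (b + e / v ^ 2) * Real.exp (-(b * v - e / v) ^ 2)) (Set.Ioi 0) :=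
    hlin_iff.1 hEint
  have hpull_val : ∫ v in Set.Ioi (0:ℝ), (b + e / v ^ 2) * Real.exp (-(b * v - e / v) ^ 2)
      = Real.sqrt Real.pi := by rw [← hlin_val, hEval]
  -- pointwise identity relating the pullback to W v = (c + a/v²) Q v
  have heqW : Set.EqOn (fun v : ℝ => (b + e / v ^ 2) * Real.exp (-(b * v - e / v) ^ 2))
      (fun v : ℝ => (Real.exp (a * c) / Real.sqrt 2) *
        ((c + a / v ^ 2) * Real.exp (-(lam * v ^ 2 + a ^ 2 / (2 * v ^ 2))))) (Set.Ioi 0) := by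
    intro v hv
    have hv0 : (0:ℝ) < v := hv
    have hvne : v ≠ 0 := ne_of_gt hv0
    simp only
    have hgv : (b * v - e / v) ^ 2 = lam * v ^ 2 + a ^ 2 / (2 * v ^ 2) - a * c := by
      have expand : (b * v - e / v) ^ 2 = b ^ 2 * v ^ 2 - 2 * (b * e) + e ^ 2 / v ^ 2 := by
        field_simp
        ring
      rw [expand, hb2, hbe, he2]
      ring
    rw [hgv]
    have hexp : Real.exp (-(lam * v ^ 2 + a ^ 2 / (2 * v ^ 2) - a * c))
        = Real.exp (a * c) * Real.exp (-(lam * v ^ 2 + a ^ 2 / (2 * v ^ 2))) := by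
      rw [← Real.exp_add]; congr 1; ring
    rw [hexp]
    have hfac : b + e / v ^ 2 = (c + a / v ^ 2) / Real.sqrt 2 := by
      rw [eq_div_iff (ne_of_gt hs2pos)]
      have h1 : Real.sqrt 2 * b = c := by rw [hsb]
      have h2 : (e / v ^ 2) * Real.sqrt 2 = a / v ^ 2 := by
        rw [div_mul_eq_mul_div, mul_comm, hse]
      linear_combination h1 + h2
    rw [hfac]
    ring
  -- value and integrability of W
  have hWint' : IntegrableOn (fun v : ℝ => (Real.exp (a * c) / Real.sqrt 2) *
      ((c + a / v ^ 2) * Real.exp (-(lam * v ^ 2 + a ^ 2 / (2 * v ^ 2))))) (Set.Ioi 0) :=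
    hpull_int.congr_fun heqW measurableSet_Ioi
  have hWval' : ∫ v in Set.Ioi (0:ℝ), (Real.exp (a * c) / Real.sqrt 2) *
      ((c + a / v ^ 2) * Real.exp (-(lam * v ^ 2 + a ^ 2 / (2 * v ^ 2))))
      = Real.sqrt Real.pi := by
    rw [← setIntegral_congr_fun measurableSet_Ioi heqW, hpull_val]
  have hexpne : Real.exp (a * c) ≠ 0 := Real.exp_ne_zero _
  have hWval : ∫ v in Set.Ioi (0:ℝ),
      (c + a / v ^ 2) * Real.exp (-(lam * v ^ 2 + a ^ 2 / (2 * v ^ 2)))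
      = Real.sqrt 2 * Real.exp (-(a * c)) * Real.sqrt Real.pi := by
    rw [integral_const_mul] at hWval'
    rw [Real.exp_neg]
    set I := ∫ v in Set.Ioi (0:ℝ),
      (c + a / v ^ 2) * Real.exp (-(lam * v ^ 2 + a ^ 2 / (2 * v ^ 2))) with hI
    rw [← hWval']
    field_simp
  have hWint : IntegrableOn (fun v : ℝ =>
      (c + a / v ^ 2) * Real.exp (-(lam * v ^ 2 + a ^ 2 / (2 * v ^ 2)))) (Set.Ioi 0) := by
    have h2 : IntegrableOn (fun v : ℝ => (Real.sqrt 2 / Real.exp (a * c)) *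
        ((Real.exp (a * c) / Real.sqrt 2) *
          ((c + a / v ^ 2) * Real.exp (-(lam * v ^ 2 + a ^ 2 / (2 * v ^ 2)))))) (Set.Ioi 0) :=
      hWint'.const_mul (Real.sqrt 2 / Real.exp (a * c))
    apply h2.congr_fun _ measurableSet_Ioi
    intro v _
    simp only
    field_simp
  -- continuity facts
  have hQcont : ContinuousOn (fun v : ℝ => Real.exp (-(lam * v ^ 2 + a ^ 2 / (2 * v ^ 2))))
      (Set.Ioi 0) := by
    apply ContinuousOn.rexp
    apply ContinuousOn.neg
    apply ContinuousOn.add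
    · exact continuousOn_const.mul (continuousOn_pow 2)
    · exact continuousOn_const.div (continuousOn_const.mul (continuousOn_pow 2))
        (fun v hv => by have h0 : (0:ℝ) < v := hv; positivity)
  have hAcont : ContinuousOn (fun v : ℝ => a / v ^ 2 *
      Real.exp (-(lam * v ^ 2 + a ^ 2 / (2 * v ^ 2)))) (Set.Ioi 0) :=
    (continuousOn_const.div (continuousOn_pow 2)
      (fun v hv => by have h0 : (0:ℝ) < v := hv; positivity)).mul hQcont
  have hBcont : ContinuousOn (fun v : ℝ => c *
      Real.exp (-(lam * v ^ 2 + a ^ 2 / (2 * v ^ 2)))) (Set.Ioi 0) :=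
    continuousOn_const.mul hQcont
  have hA_int : IntegrableOn (fun v : ℝ => a / v ^ 2 *
      Real.exp (-(lam * v ^ 2 + a ^ 2 / (2 * v ^ 2)))) (Set.Ioi 0) := by
    apply Integrable.mono hWint (hAcont.aestronglyMeasurable measurableSet_Ioi)
    rw [ae_restrict_iff' measurableSet_Ioi]
    apply ae_of_all
    intro v hv
    have hv0 : (0:ℝ) < v := hv
    have hQpos : 0 < Real.exp (-(lam * v ^ 2 + a ^ 2 / (2 * v ^ 2))) := Real.exp_pos _
    have hav : 0 < a / v ^ 2 := by positivity
    rw [Real.norm_eq_abs, Real.norm_eq_abs, abs_of_nonneg (by positivity),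
      abs_of_nonneg (by positivity)]
    nlinarith
  have hB_int : IntegrableOn (fun v : ℝ => c *
      Real.exp (-(lam * v ^ 2 + a ^ 2 / (2 * v ^ 2)))) (Set.Ioi 0) := by
    apply Integrable.mono hWint (hBcont.aestronglyMeasurable measurableSet_Ioi)
    rw [ae_restrict_iff' measurableSet_Ioi]
    apply ae_of_all
    intro v hv
    have hv0 : (0:ℝ) < v := hv
    have hQpos : 0 < Real.exp (-(lam * v ^ 2 + a ^ 2 / (2 * v ^ 2))) := Real.exp_pos _
    have hav : 0 < a / v ^ 2 := by positivity
    rw [Real.norm_eq_abs, Real.norm_eq_abs, abs_of_nonneg (by positivity),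
      abs_of_nonneg (by positivity)]
    nlinarith
  -- the inversion v ↦ k/v shows ∫ A = ∫ B
  obtain ⟨k, hkdef⟩ : ∃ x : ℝ, x = a / c := ⟨_, rfl⟩
  have hk : 0 < k := hkdef ▸ div_pos ha hc
  have hk2 : k ^ 2 = a ^ 2 / (2 * lam) := by rw [hkdef, div_pow, hc2]
  have hak : a / k = c := by rw [hkdef]; field_simp
  have hAB : (∫ v in Set.Ioi (0:ℝ), a / v ^ 2 * Real.exp (-(lam * v ^ 2 + a ^ 2 / (2 * v ^ 2))))
      = ∫ v in Set.Ioi (0:ℝ), c * Real.exp (-(lam * v ^ 2 + a ^ 2 / (2 * v ^ 2))) := by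
    rw [cov_inv k hk (fun v => a / v ^ 2 * Real.exp (-(lam * v ^ 2 + a ^ 2 / (2 * v ^ 2))))]
    apply setIntegral_congr_fun measurableSet_Ioi
    intro v hv
    have hv0 : (0:ℝ) < v := hv
    have hvne : v ≠ 0 := ne_of_gt hv0
    simp only
    have hQeq : Real.exp (-(lam * (k / v) ^ 2 + a ^ 2 / (2 * (k / v) ^ 2)))
        = Real.exp (-(lam * v ^ 2 + a ^ 2 / (2 * v ^ 2))) := by
      congr 1
      rw [div_pow, hk2]
      field_simp
      ring
    rw [hQeq]
    have hcoeff : k / v ^ 2 * (a / (k / v) ^ 2) = c := by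
      rw [← hak]; field_simp
    linear_combination Real.exp (-(lam * v ^ 2 + a ^ 2 / (2 * v ^ 2))) * hcoeff
  have hAval : (∫ v in Set.Ioi (0:ℝ), a / v ^ 2 * Real.exp (-(lam * v ^ 2 + a ^ 2 / (2 * v ^ 2))))
      = Real.sqrt 2 * Real.exp (-(a * c)) * Real.sqrt Real.pi / 2 := by
    have hsplit : (fun v : ℝ => (c + a / v ^ 2) * Real.exp (-(lam * v ^ 2 + a ^ 2 / (2 * v ^ 2))))
        = fun v : ℝ => a / v ^ 2 * Real.exp (-(lam * v ^ 2 + a ^ 2 / (2 * v ^ 2)))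
            + c * Real.exp (-(lam * v ^ 2 + a ^ 2 / (2 * v ^ 2))) := by
      funext v; ring
    rw [hsplit, integral_add hA_int hB_int, ← hAB] at hWval
    linarith
  -- change of variables t = v² to conclude
  obtain ⟨hsq_val, hsq_iff⟩ := cov_sq (fun t : ℝ => Real.exp (-lam * t) *
    (a / Real.sqrt (2 * Real.pi * t ^ 3)) * Real.exp (-a ^ 2 / (2 * t)))
  have heqO : Set.EqOn (fun v : ℝ => 2 * v * (Real.exp (-lam * v ^ 2) *
        (a / Real.sqrt (2 * Real.pi * (v ^ 2) ^ 3)) * Real.exp (-a ^ 2 / (2 * v ^ 2))))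
      (fun v : ℝ => (2 / Real.sqrt (2 * Real.pi)) *
        (a / v ^ 2 * Real.exp (-(lam * v ^ 2 + a ^ 2 / (2 * v ^ 2))))) (Set.Ioi 0) := by
    intro v hv
    have hv0 : (0:ℝ) < v := hv
    have h6 : (2 * Real.pi * (v ^ 2) ^ 3) = 2 * Real.pi * (v ^ 3) ^ 2 := by ring
    simp only
    rw [h6, Real.sqrt_mul (by positivity) ((v ^ 3) ^ 2), Real.sqrt_sq (by positivity)]
    have hsplitexp : Real.exp (-(lam * v ^ 2 + a ^ 2 / (2 * v ^ 2)))
        = Real.exp (-lam * v ^ 2) * Real.exp (-a ^ 2 / (2 * v ^ 2)) := by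
      rw [← Real.exp_add]; congr 1; ring
    rw [hsplitexp]
    have hsp : Real.sqrt (2 * Real.pi) ≠ 0 := by positivity
    field_simp
  constructor
  · rw [hsq_iff]
    have h2 : IntegrableOn (fun v : ℝ => (2 / Real.sqrt (2 * Real.pi)) *
        (a / v ^ 2 * Real.exp (-(lam * v ^ 2 + a ^ 2 / (2 * v ^ 2))))) (Set.Ioi 0) :=
      hA_int.const_mul _
    exact h2.congr_fun heqO.symm measurableSet_Ioi
  · rw [hsq_val, setIntegral_congr_fun measurableSet_Ioi heqO, integral_const_mul, hAval,
      Real.sqrt_mul (by norm_num : (0:ℝ) ≤ 2) Real.pi, ← hcdef]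
    have hsppos : Real.sqrt Real.pi ≠ 0 := by positivity
    field_simp




lemma summable_ratio (h : ℝ) (hh : 0 < h) (y : ℝ) (hy0 : 0 < y) (hy1 : y < 1) :
    Summable (fun n : ℕ => Real.Gamma ((n : ℝ) + h) / (n.factorial : ℝ) * y ^ n) := by
  apply summable_of_ratio_test_tendsto_lt_one hy1
  · apply Filter.Eventually.of_forall
    intro n
    have hg : 0 < Real.Gamma ((n : ℝ) + h) := Real.Gamma_pos_of_pos (by positivity)
    have hf : 0 < (n.factorial : ℝ) := by exact_mod_cast n.factorial_pos
    positivity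
  · have key : ∀ n : ℕ,
        ‖Real.Gamma (((n + 1 : ℕ) : ℝ) + h) / ((n + 1).factorial : ℝ) * y ^ (n + 1)‖ /
          ‖Real.Gamma ((n : ℝ) + h) / (n.factorial : ℝ) * y ^ n‖
        = (((n : ℝ) + h) / ((n : ℝ) + 1)) * y := by
      intro n
      have hg : 0 < Real.Gamma ((n : ℝ) + h) := Real.Gamma_pos_of_pos (by positivity)
      have hg' : 0 < Real.Gamma (((n + 1 : ℕ) : ℝ) + h) := Real.Gamma_pos_of_pos (by positivity)
      have hf : 0 < (n.factorial : ℝ) := by exact_mod_cast n.factorial_pos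
      have hf' : 0 < ((n + 1).factorial : ℝ) := by exact_mod_cast (n + 1).factorial_pos
      have hgrec : Real.Gamma (((n + 1 : ℕ) : ℝ) + h)
          = ((n : ℝ) + h) * Real.Gamma ((n : ℝ) + h) := by
        push_cast
        rw [show (n : ℝ) + 1 + h = ((n : ℝ) + h) + 1 by ring,
          Real.Gamma_add_one (by positivity)]
      have hfrec : ((n + 1).factorial : ℝ) = ((n : ℝ) + 1) * (n.factorial : ℝ) := by
        rw [Nat.factorial_succ]; push_cast; ring
      rw [Real.norm_eq_abs, Real.norm_eq_abs, abs_of_pos (by positivity),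
        abs_of_pos (by positivity), hgrec, hfrec]
      field_simp
      ring
    rw [show (fun n : ℕ =>
        ‖Real.Gamma (((n + 1 : ℕ) : ℝ) + h) / ((n + 1).factorial : ℝ) * y ^ (n + 1)‖ /
          ‖Real.Gamma ((n : ℝ) + h) / (n.factorial : ℝ) * y ^ n‖)
        = fun n : ℕ => (((n : ℝ) + h) / ((n : ℝ) + 1)) * y from funext key]
    have h1 : Filter.Tendsto (fun n : ℕ => ((n : ℝ) + h) / ((n : ℝ) + 1))
        Filter.atTop (nhds 1) := by
      have heq : ∀ n : ℕ, ((n : ℝ) + h) / ((n : ℝ) + 1)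
          = 1 + (h - 1) * (1 / ((n : ℝ) + 1)) := by
        intro n
        have : ((n : ℝ) + 1) ≠ 0 := by positivity
        field_simp
        ring
      rw [funext heq]
      have h2 : Filter.Tendsto (fun n : ℕ => 1 + (h - 1) * (1 / ((n : ℝ) + 1)))
          Filter.atTop (nhds (1 + (h - 1) * 0)) :=
        tendsto_const_nhds.add
          (tendsto_const_nhds.mul tendsto_one_div_add_atTop_nhds_zero_nat)
      simpa using h2
    simpa using h1.mul tendsto_const_nhds

lemma binom (h : ℝ) (hh : 0 < h) (x : ℝ) (hx0 : 0 < x) (hx1 : x < 1) :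
    ∑' n : ℕ, Real.Gamma ((n : ℝ) + h) / (n.factorial : ℝ) * (-x) ^ n
      = Real.Gamma h * (1 + x) ^ (-h) := by
  have h1x : (0:ℝ) < 1 + x := by linarith
  -- the integrand family
  have hint : ∀ n : ℕ, IntegrableOn
      (fun u : ℝ => (-x) ^ n / (n.factorial : ℝ) * (u ^ ((n : ℝ) + h - 1) * Real.exp (-u)))
      (Set.Ioi 0) := by
    intro n
    have h0 : IntegrableOn (fun u : ℝ => Real.exp (-u) * u ^ ((n : ℝ) + h - 1))
        (Set.Ioi 0) := Real.GammaIntegral_convergent (by positivity)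
    have h1 : IntegrableOn (fun u : ℝ => (-x) ^ n / (n.factorial : ℝ) *
        (Real.exp (-u) * u ^ ((n : ℝ) + h - 1))) (Set.Ioi 0) :=
      h0.const_mul ((-x) ^ n / (n.factorial : ℝ))
    apply h1.congr_fun _ measurableSet_Ioi
    intro u _
    simp only
    ring
  have hval : ∀ n : ℕ, ∫ u in Set.Ioi (0:ℝ),
      (-x) ^ n / (n.factorial : ℝ) * (u ^ ((n : ℝ) + h - 1) * Real.exp (-u))
      = (-x) ^ n / (n.factorial : ℝ) * Real.Gamma ((n : ℝ) + h) := by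
    intro n
    rw [integral_const_mul]
    congr 1
    rw [Real.Gamma_eq_integral (by positivity : (0:ℝ) < (n : ℝ) + h)]
    apply setIntegral_congr_fun measurableSet_Ioi
    intro u _
    simp only
    ring
  have hmeas : ∀ n : ℕ, AEStronglyMeasurable
      (fun u : ℝ => (-x) ^ n / (n.factorial : ℝ) * (u ^ ((n : ℝ) + h - 1) * Real.exp (-u)))
      (volume.restrict (Set.Ioi 0)) := by
    intro n
    apply ContinuousOn.aestronglyMeasurable _ measurableSet_Ioi
    apply ContinuousOn.mul continuousOn_const
    apply ContinuousOn.mul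
    · exact ContinuousOn.rpow_const continuousOn_id
        (fun u hu => Or.inl (ne_of_gt hu))
    · exact (Real.continuous_exp.comp continuous_neg).continuousOn
  have hsum : Summable (fun n : ℕ => x ^ n / (n.factorial : ℝ) * Real.Gamma ((n : ℝ) + h)) := by
    have hs := summable_ratio h hh x hx0 hx1
    apply hs.congr
    intro n
    ring
  have hpos : ∀ n : ℕ, 0 ≤ x ^ n / (n.factorial : ℝ) * Real.Gamma ((n : ℝ) + h) := by
    intro n
    have hg : 0 < Real.Gamma ((n : ℝ) + h) := Real.Gamma_pos_of_pos (by positivity)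
    have hf : 0 < (n.factorial : ℝ) := by exact_mod_cast n.factorial_pos
    positivity
  have hnorm : ∀ n : ℕ, (∫⁻ u in Set.Ioi (0:ℝ),
      ‖(-x) ^ n / (n.factorial : ℝ) * (u ^ ((n : ℝ) + h - 1) * Real.exp (-u))‖₊)
      = ENNReal.ofReal (x ^ n / (n.factorial : ℝ) * Real.Gamma ((n : ℝ) + h)) := by
    intro n
    have habs_int : IntegrableOn
        (fun u : ℝ => x ^ n / (n.factorial : ℝ) * (u ^ ((n : ℝ) + h - 1) * Real.exp (-u)))
        (Set.Ioi 0) := by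
      have h0 : IntegrableOn (fun u : ℝ => Real.exp (-u) * u ^ ((n : ℝ) + h - 1))
          (Set.Ioi 0) := Real.GammaIntegral_convergent (by positivity)
      have h1 : IntegrableOn (fun u : ℝ => x ^ n / (n.factorial : ℝ) *
          (Real.exp (-u) * u ^ ((n : ℝ) + h - 1))) (Set.Ioi 0) := h0.const_mul _
      apply h1.congr_fun _ measurableSet_Ioi
      intro u _; simp only; ring
    have habs_val : (∫ u in Set.Ioi (0:ℝ),
        x ^ n / (n.factorial : ℝ) * (u ^ ((n : ℝ) + h - 1) * Real.exp (-u)))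
        = x ^ n / (n.factorial : ℝ) * Real.Gamma ((n : ℝ) + h) := by
      rw [integral_const_mul]
      congr 1
      rw [Real.Gamma_eq_integral (by positivity : (0:ℝ) < (n : ℝ) + h)]
      apply setIntegral_congr_fun measurableSet_Ioi
      intro u _; simp only; ring
    have hnn : 0 ≤ᵐ[volume.restrict (Set.Ioi 0)]
        (fun u : ℝ => x ^ n / (n.factorial : ℝ) * (u ^ ((n : ℝ) + h - 1) * Real.exp (-u))) := by
      rw [Filter.EventuallyLE, ae_restrict_iff' measurableSet_Ioi]
      apply ae_of_all
      intro u hu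
      have hu0 : (0:ℝ) < u := hu
      have hf : 0 < (n.factorial : ℝ) := by exact_mod_cast n.factorial_pos
      positivity
    rw [← habs_val, ofReal_integral_eq_lintegral_ofReal habs_int hnn]
    apply lintegral_congr_ae
    rw [Filter.EventuallyEq, ae_restrict_iff' measurableSet_Ioi]
    apply ae_of_all
    intro u hu
    have hu0 : (0:ℝ) < u := hu
    have hf : 0 < (n.factorial : ℝ) := by exact_mod_cast n.factorial_pos
    have hw : (0:ℝ) ≤ u ^ ((n : ℝ) + h - 1) * Real.exp (-u) := by positivity
    rw [← enorm_eq_nnnorm, Real.enorm_eq_ofReal_abs, abs_mul, abs_of_nonneg hw, abs_div, abs_pow, abs_neg,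
      abs_of_pos hx0, Nat.abs_cast]
  have hne : (∑' n : ℕ, ∫⁻ u in Set.Ioi (0:ℝ),
      ‖(-x) ^ n / (n.factorial : ℝ) * (u ^ ((n : ℝ) + h - 1) * Real.exp (-u))‖₊) ≠ ⊤ := by
    rw [tsum_congr hnorm, ← ENNReal.ofReal_tsum_of_nonneg hpos hsum]
    exact ENNReal.ofReal_ne_top
  have hswap := integral_tsum hmeas hne
  calc ∑' n : ℕ, Real.Gamma ((n : ℝ) + h) / (n.factorial : ℝ) * (-x) ^ n
      = ∑' n : ℕ, ∫ u in Set.Ioi (0:ℝ),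
          (-x) ^ n / (n.factorial : ℝ) * (u ^ ((n : ℝ) + h - 1) * Real.exp (-u)) := by
        apply tsum_congr; intro n; rw [hval n]; ring
    _ = ∫ u in Set.Ioi (0:ℝ), ∑' n : ℕ,
          (-x) ^ n / (n.factorial : ℝ) * (u ^ ((n : ℝ) + h - 1) * Real.exp (-u)) := hswap.symm
    _ = ∫ u in Set.Ioi (0:ℝ), u ^ (h - 1) * Real.exp (-((1 + x) * u)) := by
        apply setIntegral_congr_fun measurableSet_Ioi
        intro u hu
        have hu0 : (0:ℝ) < u := hu
        show (∑' n : ℕ, (-x) ^ n / (n.factorial : ℝ) * (u ^ ((n : ℝ) + h - 1) * Real.exp (-u)))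
            = u ^ (h - 1) * Real.exp (-((1 + x) * u))
        have hterm : ∀ n : ℕ, (-x) ^ n / (n.factorial : ℝ) * (u ^ ((n : ℝ) + h - 1) * Real.exp (-u))
            = (u ^ (h - 1) * Real.exp (-u)) * ((-(x * u)) ^ n / (n.factorial : ℝ)) := by
          intro n
          have hrw : u ^ ((n : ℝ) + h - 1) = u ^ (h - 1) * u ^ n := by
            rw [show (n : ℝ) + h - 1 = (h - 1) + (n : ℝ) by ring, Real.rpow_add hu0,
              Real.rpow_natCast]
          have hxp : (-(x * u)) ^ n = (-x) ^ n * u ^ n := by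
            rw [← mul_pow]; ring_nf
          rw [hrw, hxp]
          ring
        rw [tsum_congr hterm, tsum_mul_left]
        have hexp : (∑' n : ℕ, (-(x * u)) ^ n / (n.factorial : ℝ)) = Real.exp (-(x * u)) := by
          rw [Real.exp_eq_exp_ℝ, NormedSpace.exp_eq_tsum_div]
        rw [hexp]
        have hcomb : Real.exp (-u) * Real.exp (-(x * u)) = Real.exp (-((1 + x) * u)) := by
          rw [← Real.exp_add]; congr 1; ring
        linear_combination u ^ (h - 1) * hcomb
    _ = (1 / (1 + x)) ^ h * Real.Gamma h := Real.integral_rpow_mul_exp_neg_mul_Ioi hh h1x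
    _ = Real.Gamma h * (1 + x) ^ (-h) := by
        rw [one_div, Real.inv_rpow h1x.le, ← Real.rpow_neg h1x.le]
        ring



end LaplaceSharpAux

set_option maxHeartbeats 1000000 in
/-- For `h > 0`, the density
`f_h^#(t) = (2^h/Γ(h)) ∑_{n≥0} (−1)^n (Γ(n+h)/Γ(n+1)) ((2n+h)/√(2πt³)) e^{−(2n+h)²/(2t)}`
has Laplace transform `(cosh √(2λ))^{−h}` at every `λ > 0`. -/
theorem laplace_transform_f_sharp (h : ℝ) (hh : 0 < h) (lam : ℝ) (hlam : 0 < lam) :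
    ∫ t in Set.Ioi (0 : ℝ),
        Real.exp (-lam * t) *
          ((2 : ℝ) ^ h / Real.Gamma h *
            ∑' n : ℕ, (-1 : ℝ) ^ n * (Real.Gamma ((n : ℝ) + h) / Real.Gamma ((n : ℝ) + 1)) *
              ((2 * (n : ℝ) + h) / Real.sqrt (2 * Real.pi * t ^ 3)) *
                Real.exp (-(2 * (n : ℝ) + h) ^ 2 / (2 * t)))
      = Real.cosh (Real.sqrt (2 * lam)) ^ (-h) := by
  have hγ : 0 < Real.Gamma h := Real.Gamma_pos_of_pos hh
  obtain ⟨s, hsdef⟩ : ∃ x : ℝ, x = Real.sqrt (2 * lam) := ⟨_, rfl⟩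
  have hs : 0 < s := hsdef ▸ Real.sqrt_pos.2 (by linarith)
  obtain ⟨y, hydef⟩ : ∃ x : ℝ, x = Real.exp (-(2 * s)) := ⟨_, rfl⟩
  have hy0 : 0 < y := hydef ▸ Real.exp_pos _
  have hy1 : y < 1 := by rw [hydef]; exact Real.exp_lt_one_iff.2 (by linarith)
  have hΓfact : ∀ n : ℕ, Real.Gamma ((n : ℝ) + 1) = (n.factorial : ℝ) := fun n => by
    exact_mod_cast Real.Gamma_nat_eq_factorial n
  have hΓpos : ∀ n : ℕ, 0 < Real.Gamma ((n : ℝ) + h) := fun n =>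
    Real.Gamma_pos_of_pos (by positivity)
  have hfactpos : ∀ n : ℕ, 0 < (n.factorial : ℝ) := fun n => by
    exact_mod_cast n.factorial_pos
  have han : ∀ n : ℕ, 0 < 2 * (n : ℝ) + h := fun n => by positivity
  have hL := fun n : ℕ => LaplaceSharpAux.levy (2 * (n : ℝ) + h) lam (han n) hlam
  -- step 1 : rewrite the integrand as a tsum
  have hrw : ∀ t : ℝ, Real.exp (-lam * t) *
      ((2 : ℝ) ^ h / Real.Gamma h *
        ∑' n : ℕ, (-1 : ℝ) ^ n * (Real.Gamma ((n : ℝ) + h) / Real.Gamma ((n : ℝ) + 1)) *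
          ((2 * (n : ℝ) + h) / Real.sqrt (2 * Real.pi * t ^ 3)) *
            Real.exp (-(2 * (n : ℝ) + h) ^ 2 / (2 * t)))
      = ∑' n : ℕ, ((2 : ℝ) ^ h / Real.Gamma h * Real.exp (-lam * t)) *
          ((-1 : ℝ) ^ n * (Real.Gamma ((n : ℝ) + h) / Real.Gamma ((n : ℝ) + 1)) *
            ((2 * (n : ℝ) + h) / Real.sqrt (2 * Real.pi * t ^ 3)) *
              Real.exp (-(2 * (n : ℝ) + h) ^ 2 / (2 * t))) := by
    intro t
    rw [tsum_mul_left]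
    ring
  -- per-n pointwise identity with the levy integrand
  have hFeq : ∀ n : ℕ, (fun t : ℝ => ((2 : ℝ) ^ h / Real.Gamma h * Real.exp (-lam * t)) *
      ((-1 : ℝ) ^ n * (Real.Gamma ((n : ℝ) + h) / Real.Gamma ((n : ℝ) + 1)) *
        ((2 * (n : ℝ) + h) / Real.sqrt (2 * Real.pi * t ^ 3)) *
          Real.exp (-(2 * (n : ℝ) + h) ^ 2 / (2 * t))))
      = fun t : ℝ => ((2 : ℝ) ^ h / Real.Gamma h *
          ((-1 : ℝ) ^ n * (Real.Gamma ((n : ℝ) + h) / Real.Gamma ((n : ℝ) + 1)))) *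
        (Real.exp (-lam * t) * ((2 * (n : ℝ) + h) / Real.sqrt (2 * Real.pi * t ^ 3)) *
          Real.exp (-(2 * (n : ℝ) + h) ^ 2 / (2 * t))) := by
    intro n
    funext t
    ring
  -- integrability of each term
  have hFint : ∀ n : ℕ, IntegrableOn (fun t : ℝ =>
      ((2 : ℝ) ^ h / Real.Gamma h * Real.exp (-lam * t)) *
      ((-1 : ℝ) ^ n * (Real.Gamma ((n : ℝ) + h) / Real.Gamma ((n : ℝ) + 1)) *
        ((2 * (n : ℝ) + h) / Real.sqrt (2 * Real.pi * t ^ 3)) *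
          Real.exp (-(2 * (n : ℝ) + h) ^ 2 / (2 * t)))) (Set.Ioi 0) := by
    intro n
    rw [hFeq n]
    exact (hL n).1.const_mul _
  -- value of each term integral
  have hFval : ∀ n : ℕ, (∫ t in Set.Ioi (0:ℝ),
      ((2 : ℝ) ^ h / Real.Gamma h * Real.exp (-lam * t)) *
      ((-1 : ℝ) ^ n * (Real.Gamma ((n : ℝ) + h) / Real.Gamma ((n : ℝ) + 1)) *
        ((2 * (n : ℝ) + h) / Real.sqrt (2 * Real.pi * t ^ 3)) *
          Real.exp (-(2 * (n : ℝ) + h) ^ 2 / (2 * t))))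
      = ((2 : ℝ) ^ h / Real.Gamma h * Real.exp (-(h * s))) *
          (Real.Gamma ((n : ℝ) + h) / (n.factorial : ℝ) * (-y) ^ n) := by
    intro n
    rw [hFeq n, integral_const_mul, (hL n).2, ← hsdef]
    rw [hΓfact n]
    have hexp : Real.exp (-((2 * (n : ℝ) + h) * s))
        = y ^ n * Real.exp (-(h * s)) := by
      rw [show -((2 * (n : ℝ) + h) * s) = (n : ℝ) * (-(2 * s)) + -(h * s) by ring,
        Real.exp_add, Real.exp_nat_mul, ← hydef]
    rw [hexp]
    have hyn : (-y : ℝ) ^ n = (-1 : ℝ) ^ n * y ^ n := by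
      rw [neg_pow]
    rw [hyn]
    ring
  -- nonnegativity of the levy integrand
  have hLnn : ∀ (n : ℕ) (t : ℝ), 0 ≤ Real.exp (-lam * t) *
      ((2 * (n : ℝ) + h) / Real.sqrt (2 * Real.pi * t ^ 3)) *
        Real.exp (-(2 * (n : ℝ) + h) ^ 2 / (2 * t)) := fun n t =>
    mul_nonneg (mul_nonneg (Real.exp_pos _).le
      (div_nonneg (han n).le (Real.sqrt_nonneg _))) (Real.exp_pos _).le
  -- absolute value of the constants
  have hKabs : ∀ n : ℕ, |(2 : ℝ) ^ h / Real.Gamma h *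
      ((-1 : ℝ) ^ n * (Real.Gamma ((n : ℝ) + h) / Real.Gamma ((n : ℝ) + 1)))|
      = (2 : ℝ) ^ h / Real.Gamma h * (Real.Gamma ((n : ℝ) + h) / (n.factorial : ℝ)) := by
    intro n
    rw [hΓfact n, abs_mul, abs_mul, abs_pow, abs_neg, abs_one, one_pow, one_mul,
      abs_of_pos (by positivity : (0:ℝ) < (2:ℝ) ^ h / Real.Gamma h),
      abs_of_pos (div_pos (hΓpos n) (hfactpos n))]
  -- the exponential splitting
  have hexp : ∀ n : ℕ, Real.exp (-((2 * (n : ℝ) + h) * s))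
      = y ^ n * Real.exp (-(h * s)) := by
    intro n
    rw [show -((2 * (n : ℝ) + h) * s) = (n : ℝ) * (-(2 * s)) + -(h * s) by ring,
      Real.exp_add, Real.exp_nat_mul, ← hydef]
  -- summability of the norm bounds
  have hsumc : Summable (fun n : ℕ =>
      ((2 : ℝ) ^ h / Real.Gamma h * (Real.Gamma ((n : ℝ) + h) / (n.factorial : ℝ))) *
        Real.exp (-((2 * (n : ℝ) + h) * s))) := by
    have hs0 := (LaplaceSharpAux.summable_ratio h hh y hy0 hy1).mul_left
      ((2 : ℝ) ^ h / Real.Gamma h * Real.exp (-(h * s)))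
    apply hs0.congr
    intro n
    rw [hexp n]
    ring
  have hposc : ∀ n : ℕ, 0 ≤
      ((2 : ℝ) ^ h / Real.Gamma h * (Real.Gamma ((n : ℝ) + h) / (n.factorial : ℝ))) *
        Real.exp (-((2 * (n : ℝ) + h) * s)) := by
    intro n
    have h1 : (0:ℝ) < (2:ℝ) ^ h / Real.Gamma h := by positivity
    have h2 := hΓpos n
    have h3 := hfactpos n
    positivity
  -- the ℒ¹ norms
  have hnorm : ∀ n : ℕ, (∫⁻ t in Set.Ioi (0:ℝ),
      ‖((2 : ℝ) ^ h / Real.Gamma h * Real.exp (-lam * t)) *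
      ((-1 : ℝ) ^ n * (Real.Gamma ((n : ℝ) + h) / Real.Gamma ((n : ℝ) + 1)) *
        ((2 * (n : ℝ) + h) / Real.sqrt (2 * Real.pi * t ^ 3)) *
          Real.exp (-(2 * (n : ℝ) + h) ^ 2 / (2 * t)))‖₊)
      = ENNReal.ofReal
          (((2 : ℝ) ^ h / Real.Gamma h * (Real.Gamma ((n : ℝ) + h) / (n.factorial : ℝ))) *
            Real.exp (-((2 * (n : ℝ) + h) * s))) := by
    intro n
    have h1 : IntegrableOn (fun t : ℝ =>
        ((2 : ℝ) ^ h / Real.Gamma h * (Real.Gamma ((n : ℝ) + h) / (n.factorial : ℝ))) *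
        (Real.exp (-lam * t) * ((2 * (n : ℝ) + h) / Real.sqrt (2 * Real.pi * t ^ 3)) *
          Real.exp (-(2 * (n : ℝ) + h) ^ 2 / (2 * t)))) (Set.Ioi 0) :=
      (hL n).1.const_mul _
    have h2 : (∫ t in Set.Ioi (0:ℝ),
        ((2 : ℝ) ^ h / Real.Gamma h * (Real.Gamma ((n : ℝ) + h) / (n.factorial : ℝ))) *
        (Real.exp (-lam * t) * ((2 * (n : ℝ) + h) / Real.sqrt (2 * Real.pi * t ^ 3)) *
          Real.exp (-(2 * (n : ℝ) + h) ^ 2 / (2 * t))))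
        = ((2 : ℝ) ^ h / Real.Gamma h * (Real.Gamma ((n : ℝ) + h) / (n.factorial : ℝ))) *
            Real.exp (-((2 * (n : ℝ) + h) * s)) := by
      rw [integral_const_mul, (hL n).2, ← hsdef]
    have hnn : 0 ≤ᵐ[volume.restrict (Set.Ioi 0)] (fun t : ℝ =>
        ((2 : ℝ) ^ h / Real.Gamma h * (Real.Gamma ((n : ℝ) + h) / (n.factorial : ℝ))) *
        (Real.exp (-lam * t) * ((2 * (n : ℝ) + h) / Real.sqrt (2 * Real.pi * t ^ 3)) *
          Real.exp (-(2 * (n : ℝ) + h) ^ 2 / (2 * t)))) := by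
      apply ae_of_all
      intro t
      have h3 : (0:ℝ) < (2:ℝ) ^ h / Real.Gamma h := by positivity
      exact mul_nonneg (mul_nonneg h3.le (div_pos (hΓpos n) (hfactpos n)).le) (hLnn n t)
    rw [← h2, ofReal_integral_eq_lintegral_ofReal h1 hnn]
    apply lintegral_congr
    intro t
    rw [← enorm_eq_nnnorm, Real.enorm_eq_ofReal_abs]
    congr 1
    have h4 : ((2 : ℝ) ^ h / Real.Gamma h * Real.exp (-lam * t)) *
        ((-1 : ℝ) ^ n * (Real.Gamma ((n : ℝ) + h) / Real.Gamma ((n : ℝ) + 1)) *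
          ((2 * (n : ℝ) + h) / Real.sqrt (2 * Real.pi * t ^ 3)) *
            Real.exp (-(2 * (n : ℝ) + h) ^ 2 / (2 * t)))
        = ((2 : ℝ) ^ h / Real.Gamma h *
            ((-1 : ℝ) ^ n * (Real.Gamma ((n : ℝ) + h) / Real.Gamma ((n : ℝ) + 1)))) *
          (Real.exp (-lam * t) * ((2 * (n : ℝ) + h) / Real.sqrt (2 * Real.pi * t ^ 3)) *
            Real.exp (-(2 * (n : ℝ) + h) ^ 2 / (2 * t))) := by ring
    rw [h4, abs_mul, hKabs n, abs_of_nonneg (hLnn n t)]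
  have hne : (∑' n : ℕ, ∫⁻ t in Set.Ioi (0:ℝ),
      ‖((2 : ℝ) ^ h / Real.Gamma h * Real.exp (-lam * t)) *
      ((-1 : ℝ) ^ n * (Real.Gamma ((n : ℝ) + h) / Real.Gamma ((n : ℝ) + 1)) *
        ((2 * (n : ℝ) + h) / Real.sqrt (2 * Real.pi * t ^ 3)) *
          Real.exp (-(2 * (n : ℝ) + h) ^ 2 / (2 * t)))‖₊) ≠ ⊤ := by
    rw [tsum_congr hnorm, ← ENNReal.ofReal_tsum_of_nonneg hposc hsumc]
    exact ENNReal.ofReal_ne_top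
  have hmeas : ∀ n : ℕ, AEStronglyMeasurable (fun t : ℝ =>
      ((2 : ℝ) ^ h / Real.Gamma h * Real.exp (-lam * t)) *
      ((-1 : ℝ) ^ n * (Real.Gamma ((n : ℝ) + h) / Real.Gamma ((n : ℝ) + 1)) *
        ((2 * (n : ℝ) + h) / Real.sqrt (2 * Real.pi * t ^ 3)) *
          Real.exp (-(2 * (n : ℝ) + h) ^ 2 / (2 * t))))
      (volume.restrict (Set.Ioi 0)) := fun n => (hFint n).aestronglyMeasurable
  -- final algebra
  have hcosh : Real.cosh s = Real.exp s * (1 + y) / 2 := by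
    have h3 : s + -(2 * s) = -s := by ring
    rw [Real.cosh_eq, hydef, mul_add, mul_one, ← Real.exp_add, h3]
  have hfinal : ((2 : ℝ) ^ h / Real.Gamma h * Real.exp (-(h * s))) *
      (Real.Gamma h * (1 + y) ^ (-h)) = Real.cosh s ^ (-h) := by
    rw [hcosh, Real.div_rpow (mul_nonneg (Real.exp_pos s).le (by linarith)) (by norm_num : (0:ℝ) ≤ 2),
      Real.mul_rpow (Real.exp_pos s).le (by linarith : (0:ℝ) ≤ 1 + y),
      ← Real.exp_mul, Real.rpow_neg (by norm_num : (0:ℝ) ≤ 2),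
      show s * -h = -(h * s) by ring]
    have h2h : (0:ℝ) < (2:ℝ) ^ h := Real.rpow_pos_of_pos two_pos h
    field_simp
  rw [← hsdef, ← hfinal]
  calc ∫ t in Set.Ioi (0 : ℝ),
        Real.exp (-lam * t) *
          ((2 : ℝ) ^ h / Real.Gamma h *
            ∑' n : ℕ, (-1 : ℝ) ^ n * (Real.Gamma ((n : ℝ) + h) / Real.Gamma ((n : ℝ) + 1)) *
              ((2 * (n : ℝ) + h) / Real.sqrt (2 * Real.pi * t ^ 3)) *
                Real.exp (-(2 * (n : ℝ) + h) ^ 2 / (2 * t)))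
      = ∫ t in Set.Ioi (0:ℝ), ∑' n : ℕ,
          ((2 : ℝ) ^ h / Real.Gamma h * Real.exp (-lam * t)) *
          ((-1 : ℝ) ^ n * (Real.Gamma ((n : ℝ) + h) / Real.Gamma ((n : ℝ) + 1)) *
            ((2 * (n : ℝ) + h) / Real.sqrt (2 * Real.pi * t ^ 3)) *
              Real.exp (-(2 * (n : ℝ) + h) ^ 2 / (2 * t))) := by
        apply setIntegral_congr_fun measurableSet_Ioi
        intro t _
        exact hrw t
    _ = ∑' n : ℕ, ∫ t in Set.Ioi (0:ℝ),
          ((2 : ℝ) ^ h / Real.Gamma h * Real.exp (-lam * t)) *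
          ((-1 : ℝ) ^ n * (Real.Gamma ((n : ℝ) + h) / Real.Gamma ((n : ℝ) + 1)) *
            ((2 * (n : ℝ) + h) / Real.sqrt (2 * Real.pi * t ^ 3)) *
              Real.exp (-(2 * (n : ℝ) + h) ^ 2 / (2 * t))) := integral_tsum hmeas hne
    _ = ∑' n : ℕ, ((2 : ℝ) ^ h / Real.Gamma h * Real.exp (-(h * s))) *
          (Real.Gamma ((n : ℝ) + h) / (n.factorial : ℝ) * (-y) ^ n) := tsum_congr hFval
    _ = ((2 : ℝ) ^ h / Real.Gamma h * Real.exp (-(h * s))) *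
          ∑' n : ℕ, Real.Gamma ((n : ℝ) + h) / (n.factorial : ℝ) * (-y) ^ n := tsum_mul_left
    _ = ((2 : ℝ) ^ h / Real.Gamma h * Real.exp (-(h * s))) *
          (Real.Gamma h * (1 + y) ^ (-h)) := by
        rw [LaplaceSharpAux.binom h hh y hy0 hy1]
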